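/- Let R be a ring. Then R is semiprime and right endoartinian if and only if R is a semisimple ring. -/

import Mathlib

open MulOpposite

/-- A module `M` over a ring `S` is *endoartinian* if every descending chain of images of
module endomorphisms of `M` stabilizes.  (A right `R`-module is treated as a module over
`Rᵐᵒᵖ`.) -/
def IsEndoartinian (S M : Type*) [Ring S] [AddCommGroup M] [Module S M] : Prop :=
  ∀ f : ℕ → M →ₗ[S] M,
    (∀ n, LinearMap.range (f (n + 1)) ≤ LinearMap.range (f n)) →
    ∃ n, ∀ k, n ≤ k → LinearMap.range (f k) = LinearMap.range (f n)

section Aux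

variable {R : Type*} [Ring R]

/-- Left multiplication by `a` as an `Rᵐᵒᵖ`-linear endomorphism of `R`. -/
def lmulOp (a : R) : R →ₗ[Rᵐᵒᵖ] R where
  toFun x := a * x
  map_add' := mul_add a
  map_smul' c x := by simp [MulOpposite.smul_eq_mul_unop, mul_assoc]

lemma lmulOp_range (a : R) :
    LinearMap.range (lmulOp a) = Submodule.span Rᵐᵒᵖ {a} := by
  ext x
  simp only [LinearMap.mem_range, Submodule.mem_span_singleton,
    MulOpposite.smul_eq_mul_unop]
  constructor
  · rintro ⟨y, rfl⟩; exact ⟨op y, rfl⟩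
  · rintro ⟨c, rfl⟩; exact ⟨c.unop, rfl⟩

/-- Principal right ideal. -/
abbrev P (a : R) : Submodule Rᵐᵒᵖ R := Submodule.span Rᵐᵒᵖ ({a} : Set R)

lemma mem_P_of_mul_right {a : R} (r : R) : a * r ∈ P a := by
  simpa [MulOpposite.smul_eq_mul_unop] using
    Submodule.smul_mem _ (op r) (Submodule.mem_span_singleton_self a)

/-- DCC on principal right ideals from endoartinian. -/
lemma chain_stab (hA : IsEndoartinian Rᵐᵒᵖ R) (a : ℕ → R)
    (h : ∀ n, P (a (n + 1)) ≤ P (a n)) :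
    ∃ n, ∀ k, n ≤ k → P (a k) = P (a n) := by
  obtain ⟨n, hn⟩ := hA (fun n => lmulOp (a n)) (by simpa [lmulOp_range] using h)
  exact ⟨n, fun k hk => by simpa [lmulOp_range] using hn k hk⟩

/-- Existence of a minimal nonzero principal right ideal inside `P a`. -/
lemma exists_minimal (hA : IsEndoartinian Rᵐᵒᵖ R) (a : R) (ha : a ≠ 0) :
    ∃ m : R, m ≠ 0 ∧ P m ≤ P a ∧ ∀ b : R, b ≠ 0 → P b ≤ P m → P m ≤ P b := by
  by_contra h
  push_neg at h
  -- h : ∀ m, m ≠ 0 → P m ≤ P a → ∃ b, b ≠ 0 ∧ P b ≤ P m ∧ ¬ P m ≤ P b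
  let T := {x : R // x ≠ 0 ∧ P x ≤ P a}
  have next : ∀ x : T, ∃ y : T, P y.1 ≤ P x.1 ∧ ¬ P x.1 ≤ P y.1 := by
    rintro ⟨x, hx0, hxa⟩
    obtain ⟨b, hb0, hble, hbn⟩ := h x hx0 hxa
    exact ⟨⟨b, hb0, hble.trans hxa⟩, hble, hbn⟩
  choose nxt h1 h2 using next
  let seq : ℕ → T := fun n => nxt^[n] ⟨a, ha, le_rfl⟩
  have hseq : ∀ n, seq (n + 1) = nxt (seq n) := fun n =>
    Function.iterate_succ_apply' nxt n _
  have hle : ∀ n, P ((seq (n + 1)).1) ≤ P ((seq n).1) := fun n => by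
    rw [hseq]; exact h1 (seq n)
  obtain ⟨n, hn⟩ := chain_stab hA (fun n => (seq n).1) hle
  have := h2 (seq n)
  rw [← hseq] at this
  exact this ((hn (n + 1) (Nat.le_succ n)).ge)

lemma atom_of_minimal {m : R} (hm : m ≠ 0)
    (hmin : ∀ b : R, b ≠ 0 → P b ≤ P m → P m ≤ P b) : IsAtom (P m) := by
  constructor
  · simpa [Submodule.span_singleton_eq_bot] using hm
  · intro q hq
    by_contra hq0
    obtain ⟨b, hbq, hb0⟩ := Submodule.exists_mem_ne_zero_of_ne_bot hq0
    have hble : P b ≤ q := (Submodule.span_singleton_le_iff_mem b q).mpr hbq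
    have := hmin b hb0 (hble.trans hq.le)
    exact hq.ne (le_antisymm hq.le (this.trans hble))

/-- Brauer's lemma: a minimal principal right ideal in a semiprime ring is generated by
an idempotent. -/
lemma exists_idem' (hsp : ∀ a : R, (∀ r : R, a * r * a = 0) → a = 0)
    {m : R} (hm : m ≠ 0) (hatom : IsAtom (P m)) :
    ∃ e : R, e ≠ 0 ∧ e * e = e ∧ P e = P m := by
  obtain ⟨r, hr⟩ : ∃ r, m * r * m ≠ 0 := by
    by_contra h; push_neg at h; exact hm (hsp m h)
  set x := m * r with hxdef
  have hx0 : x ≠ 0 := fun h => hr (by simp [h])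
  have hxm : x ∈ P m := mem_P_of_mul_right r
  have hxmm : x * m ∈ P m := by
    rw [hxdef, mul_assoc]; exact mem_P_of_mul_right (r * m)
  have hxm_le : P (x * m) ≤ P m := (Submodule.span_singleton_le_iff_mem _ _).mpr hxmm
  have hxm_ne : P (x * m) ≠ ⊥ := by
    simpa [Submodule.span_singleton_eq_bot] using hr
  have heq : P (x * m) = P m := by
    rcases hxm_le.lt_or_eq with hlt | heq
    · exact absurd (hatom.2 _ hlt) hxm_ne
    · exact heq
  have hmap : Submodule.map (lmulOp x) (P m) = P (x * m) := by
    rw [Submodule.map_span]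
    congr 1
    simp [lmulOp]
  obtain ⟨e, heP, hxe⟩ : ∃ e ∈ P m, x * e = x := by
    have : x ∈ Submodule.map (lmulOp x) (P m) := by rw [hmap, heq]; exact hxm
    obtain ⟨e, heP, hxe⟩ := this
    exact ⟨e, heP, hxe⟩
  have he0 : e ≠ 0 := by rintro rfl; rw [mul_zero] at hxe; exact hx0 hxe.symm
  -- kernel argument
  have hJ : P m ⊓ LinearMap.ker (lmulOp x) = ⊥ := by
    rcases (inf_le_left : P m ⊓ LinearMap.ker (lmulOp x) ≤ P m).lt_or_eq with hlt | heqJ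
    · exact hatom.2 _ hlt
    · exfalso
      have : e ∈ P m ⊓ LinearMap.ker (lmulOp x) := by rw [heqJ]; exact heP
      have : x * e = 0 := this.2
      rw [hxe] at this
      exact hx0 this
  have hee : e * e ∈ P m := by
    simpa [MulOpposite.smul_eq_mul_unop] using
      Submodule.smul_mem (P m) (op e) heP
  have he2 : e * e = e := by
    have hmem : e * e - e ∈ P m ⊓ LinearMap.ker (lmulOp x) := by
      refine ⟨Submodule.sub_mem _ hee heP, ?_⟩
      have : x * (e * e - e) = 0 := by
        rw [mul_sub, ← mul_assoc, hxe, hxe, sub_self]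
      simpa [lmulOp, LinearMap.mem_ker] using this
    rw [hJ] at hmem
    simpa [sub_eq_zero] using hmem
  have hePle : P e ≤ P m := (Submodule.span_singleton_le_iff_mem _ _).mpr heP
  have hePeq : P e = P m := by
    rcases hePle.lt_or_eq with hlt | heq
    · exact absurd (hatom.2 _ hlt) (by simpa [Submodule.span_singleton_eq_bot] using he0)
    · exact heq
  exact ⟨e, he0, he2, hePeq⟩

end Aux

/-- A ring is semiprime and right endoartinian iff it is semisimple (as a right module
over itself). -/
theorem semiprime_isEndoartinian_iff_semisimple (R : Type*) [Ring R] :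
    ((∀ a : R, (∀ r : R, a * r * a = 0) → a = 0) ∧ IsEndoartinian Rᵐᵒᵖ R) ↔
      IsSemisimpleModule Rᵐᵒᵖ R := by
  constructor
  · rintro ⟨hsp, hA⟩
    classical
    have step : ∀ a : R, a ≠ 0 →
        ∃ e : R, e ≠ 0 ∧ e * e = e ∧ IsAtom (P e) ∧ P e ≤ P a := by
      intro a ha
      obtain ⟨m, hm0, hma, hmin⟩ := exists_minimal hA a ha
      have hatom := atom_of_minimal hm0 hmin
      obtain ⟨e, he0, he2, hePm⟩ := exists_idem' hsp hm0 hatom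
      exact ⟨e, he0, he2, hePm ▸ hatom, hePm.le.trans hma⟩
    set Soc := sSup {p : Submodule Rᵐᵒᵖ R | IsAtom p} with hSocDef
    let f : R → R := fun a => if h : a = 0 then 0 else a - (step a h).choose * a
    have hf_eq : ∀ (a : R) (h : a ≠ 0), f a = a - (step a h).choose * a := by
      intro a h; simp only [f, dif_neg h]
    have hf_zero : f 0 = 0 := by simp [f]
    have hf_mem : ∀ a : R, f a ∈ P a := by
      intro a
      by_cases h : a = 0
      · subst h; rw [hf_zero]; exact Submodule.zero_mem _
      · rw [hf_eq a h]
        obtain ⟨he0, he2, hatom, hle⟩ := (step a h).choose_spec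
        have hea : (step a h).choose ∈ P a := hle (Submodule.mem_span_singleton_self _)
        have : (step a h).choose * a ∈ P a := by
          simpa [MulOpposite.smul_eq_mul_unop] using
            Submodule.smul_mem (P a) (op a) hea
        exact Submodule.sub_mem _ (Submodule.mem_span_singleton_self a) this
    have hf_le : ∀ a : R, P (f a) ≤ P a := fun a =>
      (Submodule.span_singleton_le_iff_mem _ _).mpr (hf_mem a)
    have hf_ne : ∀ (a : R), a ≠ 0 → P (f a) ≠ P a := by
      intro a h heq
      obtain ⟨he0, he2, hatom, hle⟩ := (step a h).choose_spec
      set e := (step a h).choose with hedef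
      have heP : e ∈ P (f a) := by
        rw [heq]; exact hle (Submodule.mem_span_singleton_self e)
      obtain ⟨c, hc⟩ := Submodule.mem_span_singleton.mp heP
      rw [MulOpposite.smul_eq_mul_unop] at hc
      have hkill : e * f a = 0 := by
        rw [hf_eq a h, ← hedef, mul_sub, ← mul_assoc, he2, sub_self]
      have : e = 0 := by
        calc e = e * e := he2.symm
          _ = e * (f a * MulOpposite.unop c) := by rw [hc]
          _ = (e * f a) * MulOpposite.unop c := by rw [mul_assoc]
          _ = 0 := by rw [hkill, zero_mul]
      exact he0 this
    have hf_soc : ∀ a : R, a - f a ∈ Soc := by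
      intro a
      by_cases h : a = 0
      · subst h; rw [hf_zero]; simpa using Submodule.zero_mem Soc
      · rw [hf_eq a h]
        obtain ⟨he0, he2, hatom, hle⟩ := (step a h).choose_spec
        have : (step a h).choose * a ∈ P (step a h).choose :=
          mem_P_of_mul_right a
        have hmem : (step a h).choose * a ∈ Soc :=
          le_sSup (by exact hatom : (P (step a h).choose) ∈ _) this
        simpa using hmem
    -- the descending sequence
    let seq : ℕ → R := fun n => f^[n] 1
    have hseq : ∀ n, seq (n + 1) = f (seq n) := fun n =>
      Function.iterate_succ_apply' f n 1
    obtain ⟨n, hn⟩ := chain_stab hA seq (fun n => by rw [hseq]; exact hf_le (seq n))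
    have hzero : seq n = 0 := by
      by_contra h
      exact hf_ne (seq n) h (by rw [← hseq]; exact hn (n + 1) (Nat.le_succ n))
    have htel : ∀ k, (1 : R) - seq k ∈ Soc := by
      intro k
      induction k with
      | zero => simpa [seq] using Submodule.zero_mem Soc
      | succ k ih =>
        rw [← sub_add_sub_cancel (1 : R) (seq k) (seq (k + 1))]
        exact Submodule.add_mem _ ih (by rw [hseq]; exact hf_soc (seq k))
    have h1 : (1 : R) ∈ Soc := by simpa [hzero] using htel n
    have hSocTop : sSup {p : Submodule Rᵐᵒᵖ R | IsAtom p} = ⊤ := by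
      rw [← hSocDef, Submodule.eq_top_iff']
      intro x
      simpa [MulOpposite.smul_eq_mul_unop] using Soc.smul_mem (op x) h1
    exact (isSemisimpleModule_iff _ _).mpr (complementedLattice_of_sSup_atoms_eq_top hSocTop)
  · intro hS
    constructor
    · intro a h
      obtain ⟨q, hq⟩ := exists_isCompl (P a)
      have h1 : (1 : R) ∈ P a ⊔ q := by rw [hq.sup_eq_top]; trivial
      obtain ⟨x, hx, y, hy, hxy⟩ := Submodule.mem_sup.mp h1
      obtain ⟨c, rfl⟩ := Submodule.mem_span_singleton.mp hx
      have hxa : (c • a) * a = 0 := by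
        rw [MulOpposite.smul_eq_mul_unop]; exact h c.unop
      have haq : a ∈ q := by
        have ha : a = (c • a) * a + y * a := by rw [← add_mul, hxy, one_mul]
        rw [hxa, zero_add] at ha
        rw [ha]
        simpa [MulOpposite.smul_eq_mul_unop] using q.smul_mem (op a) hy
      have : a ∈ P a ⊓ q := ⟨Submodule.mem_span_singleton_self a, haq⟩
      rw [hq.inf_eq_bot] at this
      simpa using this
    · intro f hchain
      have hfin : Module.Finite Rᵐᵒᵖ R := by
        refine ⟨⟨{1}, ?_⟩⟩
        rw [Submodule.eq_top_iff']
        intro x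
        have h1 : (1 : R) ∈ Submodule.span Rᵐᵒᵖ (({1} : Finset R) : Set R) :=
          Submodule.subset_span (by simp)
        have := Submodule.smul_mem (Submodule.span Rᵐᵒᵖ (({1} : Finset R) : Set R)) (op x) h1
        simpa [MulOpposite.smul_eq_mul_unop] using this
      have hart : IsArtinian Rᵐᵒᵖ R := (IsSemisimpleModule.finite_tfae.out 0 2).mp hfin
      have hmono : Antitone fun n => LinearMap.range (f n) := antitone_nat_of_succ_le hchain
      obtain ⟨n, hn⟩ := monotone_stabilizes_iff_artinian.mpr hart
        ⟨fun n => OrderDual.toDual (LinearMap.range (f n)), fun i j hij => hmono hij⟩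
      exact ⟨n, fun k hk => (hn k hk).symm⟩
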